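/- Let d < 0 be a squarefree integer and let τ ∈ O_{Q(√d)} be an algebraic integer with trace Tr(τ) = 1. If τ is associated (differs by a unit of O_{Q(√d)}) with a p-th power in O_{Q(√d)} for some odd prime p, then τ is a unit of O_{Q(√d)}. -/

import Mathlib

open NumberField Finset

section Aux

variable {K : Type} [Field K] [NumberField K]

lemma indep1 {d : ℤ} (hd : d < 0) {α : K} (hα : α ^ 2 = (d : K))
    {a c : ℚ} (h : algebraMap ℚ K a + algebraMap ℚ K c * α = 0) : a = 0 ∧ c = 0 := by
  by_cases hc : c = 0
  · refine ⟨?_, hc⟩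
    rw [hc, map_zero, zero_mul, add_zero] at h
    exact (map_eq_zero _).mp h
  · exfalso
    have hcK : algebraMap ℚ K c ≠ 0 := (map_ne_zero _).mpr hc
    have hαr : α = algebraMap ℚ K (-a / c) := by
      apply mul_left_cancel₀ hcK
      rw [← map_mul]
      have : c * (-a / c) = -a := by field_simp
      rw [this, map_neg]
      linear_combination h
    have hdQ : algebraMap ℚ K ((d : ℚ)) = (d : K) := map_intCast _ d
    have : ((-a / c) ^ 2 : ℚ) = (d : ℚ) := by
      apply (algebraMap ℚ K).injective
      rw [map_pow, ← hαr, hα, hdQ]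
    nlinarith [sq_nonneg ((-a/c : ℚ)), show ((d:ℚ) < 0) by exact_mod_cast hd]

lemma span1 {d : ℤ} (hd : d < 0) {α : K} (hα : α ^ 2 = (d : K))
    (hrank : Module.finrank ℚ K = 2) (x : K) :
    ∃ a c : ℚ, x = algebraMap ℚ K a + algebraMap ℚ K c * α := by
  have hαne : α ≠ 0 := by
    intro h0
    rw [h0] at hα
    have : (d : K) = 0 := by rw [← hα]; ring
    have : (d : ℤ) = 0 := by exact_mod_cast this
    omega
  have li : LinearIndependent ℚ ![(1 : K), α] := by
    rw [linearIndependent_fin2]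
    constructor
    · simpa using hαne
    · intro a ha
      simp only [Matrix.cons_val_one, Matrix.head_cons, Matrix.cons_val_zero] at ha
      have : algebraMap ℚ K (-1) + algebraMap ℚ K a * α = 0 := by
        rw [← Algebra.smul_def, ha]; simp
      exact absurd (indep1 hd hα this).1 (by norm_num)
  let b := basisOfLinearIndependentOfCardEqFinrank li (by simpa using hrank.symm)
  have hb : ⇑b = ![(1 : K), α] := coe_basisOfLinearIndependentOfCardEqFinrank li _
  refine ⟨b.repr x 0, b.repr x 1, ?_⟩
  have hs := b.sum_repr x
  rw [Fin.sum_univ_two] at hs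
  conv_lhs => rw [← hs]
  rw [hb]
  simp [Algebra.smul_def]

lemma ch2 (M : Matrix (Fin 2) (Fin 2) ℚ) :
    M * M - Matrix.trace M • M + Matrix.det M • (1 : Matrix (Fin 2) (Fin 2) ℚ) = 0 := by
  ext i j
  fin_cases i <;> fin_cases j <;>
    simp [Matrix.mul_apply, Fin.sum_univ_two, Matrix.trace_fin_two, Matrix.det_fin_two,
      Matrix.one_apply] <;> ring

lemma key1 (hrank : Module.finrank ℚ K = 2) (x : K) :
    x ^ 2 - algebraMap ℚ K (Algebra.trace ℚ K x) * x + algebraMap ℚ K (Algebra.norm ℚ x) = 0 := by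
  let b : Module.Basis (Fin 2) ℚ K := Module.finBasisOfFinrankEq ℚ K hrank
  have htr : Algebra.trace ℚ K x = Matrix.trace (Algebra.leftMulMatrix b x) :=
    Algebra.trace_eq_matrix_trace b x
  have hnm : Algebra.norm ℚ x = Matrix.det (Algebra.leftMulMatrix b x) :=
    Algebra.norm_eq_matrix_det b x
  apply Algebra.leftMulMatrix_injective b
  rw [map_add, map_sub, map_pow, map_mul, AlgHom.commutes, AlgHom.commutes, map_zero]
  rw [htr, hnm, Algebra.algebraMap_eq_smul_one, Algebra.algebraMap_eq_smul_one,
    pow_two, smul_mul_assoc, one_mul]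
  exact ch2 _


lemma trace_A (hrank : Module.finrank ℚ K = 2) (q : ℚ) :
    Algebra.trace ℚ K (algebraMap ℚ K q) = 2 * q := by
  rw [Algebra.trace_algebraMap, hrank]
  push_cast [nsmul_eq_mul]
  ring

lemma norm_A (hrank : Module.finrank ℚ K = 2) (q : ℚ) :
    Algebra.norm ℚ (algebraMap ℚ K q) = q ^ 2 := by
  rw [Algebra.norm_algebraMap, hrank]

lemma mulco {d : ℤ} {α : K} (hα : α ^ 2 = (d : K)) (a c e f : ℚ) :
    (algebraMap ℚ K a + algebraMap ℚ K c * α) * (algebraMap ℚ K e + algebraMap ℚ K f * α)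
      = algebraMap ℚ K (a*e + c*f*(d:ℚ)) + algebraMap ℚ K (a*f + c*e) * α := by
  have hαα : α * α = algebraMap ℚ K ((d:ℚ)) := by
    rw [← pow_two, hα, map_intCast]
  simp only [map_add, map_mul]
  linear_combination (algebraMap ℚ K c * algebraMap ℚ K f) * hαα

lemma traceα {d : ℤ} (hd : d < 0) {α : K} (hα : α ^ 2 = (d : K))
    (hrank : Module.finrank ℚ K = 2) : Algebra.trace ℚ K α = 0 := by
  have h := key1 hrank α
  rw [hα] at h
  have h2 : algebraMap ℚ K ((d:ℚ) + Algebra.norm ℚ α)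
      + algebraMap ℚ K (-(Algebra.trace ℚ K α)) * α = 0 := by
    rw [map_add, map_neg, map_intCast]
    linear_combination h
  have := (indep1 hd hα h2).2
  linarith

/-- the conjugation -/
noncomputable def conj (x : K) : K := algebraMap ℚ K (Algebra.trace ℚ K x) - x

lemma conj_A (hrank : Module.finrank ℚ K = 2) (q : ℚ) :
    conj (algebraMap ℚ K q) = algebraMap ℚ K q := by
  unfold conj
  rw [trace_A hrank, show (2*q : ℚ) = q + q by ring, map_add]
  ring

lemma trace_coords {d : ℤ} (hd : d < 0) {α : K} (hα : α ^ 2 = (d : K))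
    (hrank : Module.finrank ℚ K = 2) (a c : ℚ) :
    Algebra.trace ℚ K (algebraMap ℚ K a + algebraMap ℚ K c * α) = 2 * a := by
  rw [map_add, trace_A hrank, ← Algebra.smul_def, map_smul, traceα hd hα hrank]
  simp

lemma conj_coords {d : ℤ} (hd : d < 0) {α : K} (hα : α ^ 2 = (d : K))
    (hrank : Module.finrank ℚ K = 2) (a c : ℚ) :
    conj (algebraMap ℚ K a + algebraMap ℚ K c * α)
      = algebraMap ℚ K a - algebraMap ℚ K c * α := by
  unfold conj
  rw [trace_coords hd hα hrank, show (2*a : ℚ) = a + a by ring, map_add]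
  ring

lemma conj_mulK {d : ℤ} (hd : d < 0) {α : K} (hα : α ^ 2 = (d : K))
    (hrank : Module.finrank ℚ K = 2) (x y : K) :
    conj (x * y) = conj x * conj y := by
  obtain ⟨a, c, rfl⟩ := span1 hd hα hrank x
  obtain ⟨e, f, rfl⟩ := span1 hd hα hrank y
  rw [mulco hα, conj_coords hd hα hrank, conj_coords hd hα hrank, conj_coords hd hα hrank]
  have hαα : α * α = algebraMap ℚ K ((d:ℚ)) := by
    rw [← pow_two, hα, map_intCast]
  simp only [map_add, map_mul]
  linear_combination (-(algebraMap ℚ K c * algebraMap ℚ K f)) * hαα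

lemma conj_add (x y : K) : conj (x + y) = conj x + conj y := by
  unfold conj
  rw [map_add, map_add]
  ring

lemma conj_one (hrank : Module.finrank ℚ K = 2) : conj (1 : K) = 1 := by
  rw [show (1:K) = algebraMap ℚ K 1 by simp, conj_A hrank]

/-- conjugation as a ℤ-algebra hom -/
noncomputable def conjHom {d : ℤ} (hd : d < 0) {α : K} (hα : α ^ 2 = (d : K))
    (hrank : Module.finrank ℚ K = 2) : K →ₐ[ℤ] K where
  toFun := conj
  map_one' := conj_one hrank
  map_mul' := conj_mulK hd hα hrank
  map_zero' := by unfold conj; simp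
  map_add' := conj_add
  commutes' := fun n => by
    have h1 : algebraMap ℤ K n = algebraMap ℚ K ((n : ℚ)) := by
      simp [algebraMap_int_eq, map_intCast]
    rw [h1]
    exact conj_A hrank _

lemma conj_integral {d : ℤ} (hd : d < 0) {α : K} (hα : α ^ 2 = (d : K))
    (hrank : Module.finrank ℚ K = 2) (x : 𝓞 K) : IsIntegral ℤ (conj (x : K)) :=
  (NumberField.RingOfIntegers.isIntegral_coe x).map (conjHom hd hα hrank)

lemma trace_int {d : ℤ} (hd : d < 0) {α : K} (hα : α ^ 2 = (d : K))
    (hrank : Module.finrank ℚ K = 2) (x : 𝓞 K) :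
    ∃ t : ℤ, Algebra.trace ℚ K (x : K) = t := by
  have h1 : IsIntegral ℤ ((x : K) + conj (x : K)) :=
    (NumberField.RingOfIntegers.isIntegral_coe x).add (conj_integral hd hα hrank x)
  have h2 : (x : K) + conj (x : K) = algebraMap ℚ K (Algebra.trace ℚ K (x : K)) := by
    unfold conj; ring
  rw [h2] at h1
  have h3 : IsIntegral ℤ (Algebra.trace ℚ K (x : K)) :=
    IsIntegral.tower_bot (algebraMap ℚ K).injective h1
  obtain ⟨t, ht⟩ := IsIntegrallyClosed.isIntegral_iff.mp h3
  exact ⟨t, by rw [← ht]; simp [algebraMap_int_eq]⟩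

lemma nm_eq (hrank : Module.finrank ℚ K = 2) (x : K) :
    x * conj x = algebraMap ℚ K (Algebra.norm ℚ x) := by
  unfold conj
  linear_combination -(key1 hrank x)

lemma norm_int {d : ℤ} (hd : d < 0) {α : K} (hα : α ^ 2 = (d : K))
    (hrank : Module.finrank ℚ K = 2) (x : 𝓞 K) :
    ∃ n : ℤ, Algebra.norm ℚ (x : K) = n := by
  have h1 : IsIntegral ℤ ((x : K) * conj (x : K)) :=
    (NumberField.RingOfIntegers.isIntegral_coe x).mul (conj_integral hd hα hrank x)
  rw [nm_eq hrank] at h1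
  have h3 : IsIntegral ℤ (Algebra.norm ℚ (x : K)) :=
    IsIntegral.tower_bot (algebraMap ℚ K).injective h1
  obtain ⟨t, ht⟩ := IsIntegrallyClosed.isIntegral_iff.mp h3
  exact ⟨t, by rw [← ht]; simp [algebraMap_int_eq]⟩

lemma norm_pos {d : ℤ} (hd : d < 0) {α : K} (hα : α ^ 2 = (d : K))
    (hrank : Module.finrank ℚ K = 2) (x : K) (hx : x ≠ 0) :
    0 < Algebra.norm ℚ x := by
  obtain ⟨a, c, rfl⟩ := span1 hd hα hrank x
  have h1 : algebraMap ℚ K (Algebra.norm ℚ (algebraMap ℚ K a + algebraMap ℚ K c * α))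
      = algebraMap ℚ K (a*a + c*(-c)*(d:ℚ) + 0) := by
    rw [← nm_eq hrank, conj_coords hd hα hrank,
      show algebraMap ℚ K a - algebraMap ℚ K c * α
        = algebraMap ℚ K a + algebraMap ℚ K (-c) * α by rw [map_neg]; ring,
      mulco hα]
    rw [show (a*(-c) + c*a : ℚ) = 0 by ring]
    simp
  have h2 : Algebra.norm ℚ (algebraMap ℚ K a + algebraMap ℚ K c * α)
      = a*a + c*(-c)*(d:ℚ) + 0 := (algebraMap ℚ K).injective h1
  rw [h2]
  have hdq : (d : ℚ) < 0 := by exact_mod_cast hd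
  rcases eq_or_ne c 0 with hc | hc
  · subst hc
    have ha : a ≠ 0 := by
      intro h0; apply hx; rw [h0]; simp
    nlinarith [mul_self_pos.mpr ha]
  · nlinarith [sq_nonneg a, mul_pos (mul_self_pos.mpr hc) (neg_pos.mpr hdq)]

lemma sqrat {d : ℤ} (hd : d < 0) {α : K} (hα : α ^ 2 = (d : K))
    (hrank : Module.finrank ℚ K = 2) (y : K) (s : ℚ)
    (h : y ^ 2 = algebraMap ℚ K s) :
    (∃ w : ℚ, y = algebraMap ℚ K w ∧ s = w ^ 2) ∨ s < 0 := by
  obtain ⟨a, c, rfl⟩ := span1 hd hα hrank y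
  rw [pow_two, mulco hα] at h
  have h2 : algebraMap ℚ K (a*a + c*c*(d:ℚ) - s) + algebraMap ℚ K (a*c + c*a) * α = 0 := by
    simp only [map_sub, map_add, map_mul] at h ⊢
    linear_combination h
  obtain ⟨h3, h4⟩ := indep1 hd hα h2
  rcases eq_or_ne c 0 with hc | hc
  · subst hc
    left
    exact ⟨a, by simp, by nlinarith⟩
  · right
    have ha : a = 0 := by
      rcases mul_eq_zero.mp (show a * c = 0 by linarith) with h | h
      · exact h
      · exact absurd h hc
    subst ha
    have hdq : (d : ℚ) < 0 := by exact_mod_cast hd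
    nlinarith [mul_pos (mul_self_pos.mpr hc) (neg_pos.mpr hdq)]

end Aux

/-- binomial expansion engine -/
lemma expand1 {R : Type*} [CommRing R] {p : ℕ} (hp : p.Prime) (hodd : Odd p) (x : R) :
    x ^ p + (1 - x) ^ p
      = 1 + (p : R) * x *
        (∑ k ∈ Finset.Ioo 0 p, ((p.choose k / p : ℕ) : R) * (-1) ^ k * x ^ (k - 1)) := by
  have h1 : (1 : R) - x = -x + 1 := by ring
  rw [h1, add_pow]
  have hsplit : Finset.range (p + 1) = insert 0 (insert p (Finset.Ioo 0 p)) := by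
    ext k
    simp only [Finset.mem_range, Finset.mem_insert, Finset.mem_Ioo]
    omega
  rw [hsplit, Finset.sum_insert (by simp [hp.pos]), Finset.sum_insert (by simp)]
  rw [Finset.mul_sum]
  have hterm : ∀ k ∈ Finset.Ioo 0 p,
      (-x) ^ k * (1:R) ^ (p - k) * (p.choose k : R)
        = (p : R) * x * (((p.choose k / p : ℕ) : R) * (-1) ^ k * x ^ (k - 1)) := by
    intro k hk
    rw [Finset.mem_Ioo] at hk
    have hdvd : p ∣ p.choose k := hp.dvd_choose_self (by omega) hk.2
    have hch : (p.choose k : R) = (p : R) * ((p.choose k / p : ℕ) : R) := by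
      rw [← Nat.cast_mul, Nat.mul_div_cancel' hdvd]
    have hxk : x ^ k = x * x ^ (k - 1) := by
      conv_lhs => rw [show k = (k - 1) + 1 by omega]
      rw [pow_succ]
      ring
    rw [one_pow, hch, neg_pow, hxk]
    ring
  rw [Finset.sum_congr rfl hterm]
  simp only [pow_zero, one_mul, Nat.choose_zero_right, Nat.cast_one, Nat.choose_self,
    Nat.sub_zero, Nat.sub_self, pow_zero, mul_one, one_pow]
  rw [hodd.neg_pow]
  ring

/-- integer cube lemma via FLT3 -/
lemma cube_int (mz qz : ℤ) (hm : 1 ≤ mz) (h : mz ^ 3 = 3 * qz ^ 2 + 3 * qz + 1) :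
    mz = 1 := by
  have hflt : FermatLastTheoremWith ℤ 3 :=
    fermatLastTheoremFor_iff_int.mp fermatLastTheoremThree
  have hsum : mz ^ 3 + qz ^ 3 = (qz + 1) ^ 3 := by linear_combination h
  rcases eq_or_ne qz 0 with h0 | h0
  · subst h0; nlinarith [sq_nonneg (mz - 1), sq_nonneg (mz + 1)]
  rcases eq_or_ne (qz + 1) 0 with h1 | h1
  · have : qz = -1 := by omega
    subst this
    nlinarith [sq_nonneg (mz - 1), sq_nonneg (mz + 1)]
  · exact absurd hsum (hflt mz qz (qz + 1) (by omega) h0 h1)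

section Aux3

variable {K : Type} [Field K] [NumberField K]

lemma conjHom_apply {d : ℤ} (hd : d < 0) {α : K} (hα : α ^ 2 = (d : K))
    (hrank : Module.finrank ℚ K = 2) (x : K) : conjHom hd hα hrank x = conj x := rfl

lemma conj_powK {d : ℤ} (hd : d < 0) {α : K} (hα : α ^ 2 = (d : K))
    (hrank : Module.finrank ℚ K = 2) (x : K) (n : ℕ) : conj (x ^ n) = (conj x) ^ n := by
  rw [← conjHom_apply hd hα hrank, map_pow, conjHom_apply hd hα hrank]

lemma sum_conj (x : K) : x + conj x = algebraMap ℚ K (Algebra.trace ℚ K x) := by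
  unfold conj; ring

lemma anti1 {d : ℤ} (hd : d < 0) {α : K} (hα : α ^ 2 = (d : K))
    (hrank : Module.finrank ℚ K = 2) (z : K) (hz : conj z = -z) :
    ∃ c : ℚ, z = algebraMap ℚ K c * α := by
  obtain ⟨a, c, rfl⟩ := span1 hd hα hrank z
  rw [conj_coords hd hα hrank] at hz
  have h2 : algebraMap ℚ K (a + a) + algebraMap ℚ K 0 * α = 0 := by
    rw [map_add, map_zero]
    linear_combination hz
  have := (indep1 hd hα h2).1
  have ha : a = 0 := by linarith
  exact ⟨c, by rw [ha]; simp⟩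

lemma nm_shift (hrank : Module.finrank ℚ K = 2) (z : K) :
    Algebra.norm ℚ (z - 1) = Algebra.norm ℚ z - Algebra.trace ℚ K z + 1 := by
  apply (algebraMap ℚ K).injective
  have h1 : algebraMap ℚ K (Algebra.norm ℚ (z - 1)) = (z - 1) * conj (z - 1) :=
    (nm_eq hrank (z - 1)).symm
  have h2 : conj (z - 1) = conj z - 1 := by
    unfold conj
    rw [map_sub, map_sub]
    have : Algebra.trace ℚ K (1 : K) = 2 := by
      rw [show (1 : K) = algebraMap ℚ K 1 by simp, trace_A hrank]; norm_num
    rw [this]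
    have : algebraMap ℚ K (2 : ℚ) = 2 := by norm_num
    rw [this]
    ring
  rw [h1, h2, map_add, map_sub, map_one]
  have h3 := nm_eq hrank z
  have h4 := sum_conj z
  linear_combination h3 - h4

lemma unit_norm1 {d : ℤ} (hd : d < 0) {α : K} (hα : α ^ 2 = (d : K))
    (hrank : Module.finrank ℚ K = 2) (x : 𝓞 K) (hx : Algebra.norm ℚ (x : K) = 1) :
    IsUnit x := by
  have hint : IsIntegral ℤ (conj (x : K)) := conj_integral hd hα hrank x
  refine IsUnit.of_mul_eq_one (a := x) ⟨conj (x : K), hint⟩ ?_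
  have : ((x * ⟨conj (x : K), hint⟩ : 𝓞 K) : K) = ((1 : 𝓞 K) : K) := by
    simp only [NumberField.RingOfIntegers.coe_eq_algebraMap, map_mul, map_one,
      NumberField.RingOfIntegers.map_mk]
    show (x : K) * conj (x : K) = 1
    rw [nm_eq hrank, hx, map_one]
  exact NumberField.RingOfIntegers.eq_iff.mp this

end Aux3

section Engine

variable {K : Type} [Field K] [NumberField K]

open NumberField.RingOfIntegers in
lemma mainEngine {d : ℤ} (hd : d < 0) {α : K} (hα : α ^ 2 = (d : K))
    (hrank : Module.finrank ℚ K = 2) {p : ℕ} (hp : p.Prime) (hpodd : Odd p)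
    (τ : 𝓞 K) (htr : Algebra.trace ℚ K (τ : K) = 1)
    (π : 𝓞 K) (hπ : π ^ p = τ) : IsUnit τ := by
  have hτne : τ ≠ 0 := by
    intro h
    rw [h] at htr
    simp only [NumberField.RingOfIntegers.coe_eq_algebraMap, map_zero] at htr
    exact one_ne_zero htr.symm
  have hπne : π ≠ 0 := by
    intro h
    exact hτne (by rw [← hπ, h, zero_pow hp.ne_zero])
  obtain ⟨t, ht⟩ := trace_int hd hα hrank π
  set πb : 𝓞 K := (t : 𝓞 K) - π with hπb
  have hcoeπb : algebraMap (𝓞 K) K πb = conj (algebraMap (𝓞 K) K π) := by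
    show algebraMap (𝓞 K) K ((t : 𝓞 K) - π)
      = algebraMap ℚ K (Algebra.trace ℚ K (algebraMap (𝓞 K) K π)) - algebraMap (𝓞 K) K π
    rw [map_sub, map_intCast]
    rw [show Algebra.trace ℚ K (algebraMap (𝓞 K) K π) = ((t : ℚ)) from ht, map_intCast]
  have hsum : π ^ p + πb ^ p = 1 := by
    apply NumberField.RingOfIntegers.eq_iff.mp
    simp only [NumberField.RingOfIntegers.coe_eq_algebraMap, map_add, map_pow, map_one]
    rw [hcoeπb, ← conj_powK hd hα hrank]
    have hπK : (algebraMap (𝓞 K) K π) ^ p = algebraMap (𝓞 K) K τ := by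
      rw [← map_pow, hπ]
    rw [hπK]
    rw [sum_conj]
    rw [show Algebra.trace ℚ K (algebraMap (𝓞 K) K τ) = 1 from htr]
    exact map_one _
  have hdvd : ((t : 𝓞 K)) ∣ 1 := by
    rw [← hsum, show ((t : 𝓞 K)) = π + πb by rw [hπb]; ring]
    exact Odd.add_dvd_pow_add_pow π πb hpodd
  obtain ⟨s, hs⟩ := hdvd
  have hts : t = 1 ∨ t = -1 := by
    obtain ⟨zs, hzs⟩ := norm_int hd hα hrank s
    have hsK : (1 : K) = algebraMap ℚ K ((t : ℚ)) * algebraMap (𝓞 K) K s := by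
      have := congrArg (algebraMap (𝓞 K) K) hs
      rw [map_one, map_mul, map_intCast] at this
      rw [this, map_intCast]
    have hnm := congrArg (Algebra.norm ℚ) hsK
    rw [map_one, map_mul, norm_A hrank, hzs] at hnm
    have hZ : (1 : ℤ) = t ^ 2 * zs := by exact_mod_cast hnm
    have hunit : IsUnit t := IsUnit.of_mul_eq_one (a := t) (t * zs) (by linear_combination -hZ)
    exact Int.isUnit_iff.mp hunit
  -- common expansion pieces
  rcases hts with ht1 | ht1
  · -- t = 1 : the equation π^p + (1-π)^p = 1
    have heq : π ^ p + (1 - π) ^ p = 1 := by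
      rw [show (1 : 𝓞 K) - π = πb by rw [hπb, ht1]; push_cast; ring]
      exact hsum
    have hexp := expand1 hp hpodd π
    rw [heq] at hexp
    set SO : 𝓞 K :=
      ∑ k ∈ Finset.Ioo 0 p, ((p.choose k / p : ℕ) : 𝓞 K) * (-1) ^ k * π ^ (k - 1) with hSO
    have hS0 : (p : 𝓞 K) * (π * SO) = 0 := by linear_combination -hexp
    have hp0 : (p : 𝓞 K) ≠ 0 := Nat.cast_ne_zero.mpr hp.ne_zero
    have hzero : SO = 0 := by
      rcases mul_eq_zero.mp hS0 with h | h
      · exact absurd h hp0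
      · rcases mul_eq_zero.mp h with h' | h'
        · exact absurd h' hπne
        · exact h'
    have hsplit : SO = -1 + π * (∑ k ∈ Finset.Ioo 1 p,
        ((p.choose k / p : ℕ) : 𝓞 K) * (-1) ^ k * π ^ (k - 2)) := by
      rw [hSO]
      have h1p : 1 < p := hp.one_lt
      have hIoo : Finset.Ioo 0 p = insert 1 (Finset.Ioo 1 p) := by
        ext k
        simp only [Finset.mem_Ioo, Finset.mem_insert]
        omega
      rw [hIoo, Finset.sum_insert (by simp)]
      rw [Finset.mul_sum]
      have h1 : ((p.choose 1 / p : ℕ) : 𝓞 K) * (-1) ^ 1 * π ^ (1 - 1) = -1 := by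
        rw [Nat.choose_one_right, Nat.div_self hp.pos]
        simp
      rw [h1]
      congr 1
      apply Finset.sum_congr rfl
      intro k hk
      rw [Finset.mem_Ioo] at hk
      have : π ^ (k - 1) = π * π ^ (k - 2) := by
        conv_lhs => rw [show k - 1 = (k - 2) + 1 by omega]
        rw [pow_succ]
        ring
      rw [this]
      ring
    have : π * (∑ k ∈ Finset.Ioo 1 p,
        ((p.choose k / p : ℕ) : 𝓞 K) * (-1) ^ k * π ^ (k - 2)) = 1 := by
      rw [hsplit] at hzero
      linear_combination hzero
    have hunit : IsUnit π := IsUnit.of_mul_eq_one _ this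
    rw [← hπ]
    exact hunit.pow p
  · -- t = -1 : contradiction
    exfalso
    set π₂ : 𝓞 K := -π with hπ₂
    have heq : π₂ ^ p + (1 - π₂) ^ p = -1 := by
      have e1 : π₂ ^ p = -(π ^ p) := Odd.neg_pow hpodd π
      have e2 : (1 - π₂) ^ p = -(πb ^ p) := by
        rw [show (1 : 𝓞 K) - π₂ = -πb by rw [hπb, hπ₂, ht1]; push_cast; ring]
        exact Odd.neg_pow hpodd πb
      rw [e1, e2]
      linear_combination -hsum
    have hexp := expand1 hp hpodd π₂
    rw [heq] at hexp
    set SO : 𝓞 K :=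
      ∑ k ∈ Finset.Ioo 0 p, ((p.choose k / p : ℕ) : 𝓞 K) * (-1) ^ k * π₂ ^ (k - 1) with hSO
    have hmul : (p : 𝓞 K) * π₂ * SO = -2 := by linear_combination -hexp
    have hK : (p : K) * algebraMap (𝓞 K) K π₂ * algebraMap (𝓞 K) K SO = -2 := by
      have := congrArg (algebraMap (𝓞 K) K) hmul
      rw [map_mul, map_mul, map_natCast] at this
      rw [this, map_neg, map_ofNat]
    have hπ₂K : algebraMap (𝓞 K) K π₂ ≠ 0 := by
      rw [map_ne_zero_iff _ NumberField.RingOfIntegers.coe_injective]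
      rw [hπ₂]
      exact neg_ne_zero.mpr hπne
    have hSOK : algebraMap (𝓞 K) K SO ≠ 0 := by
      intro h
      rw [h, mul_zero] at hK
      norm_num at hK
    obtain ⟨z1, hz1⟩ := norm_int hd hα hrank π₂
    obtain ⟨z2, hz2⟩ := norm_int hd hα hrank SO
    have hpos1 : 0 < z1 := by
      have := norm_pos hd hα hrank _ hπ₂K
      rw [hz1] at this
      exact_mod_cast this
    have hpos2 : 0 < z2 := by
      have := norm_pos hd hα hrank _ hSOK
      rw [hz2] at this
      exact_mod_cast this
    have hnm := congrArg (Algebra.norm ℚ) hK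
    rw [map_mul, map_mul] at hnm
    rw [show (p : K) = algebraMap ℚ K ((p : ℚ)) by rw [map_natCast]] at hnm
    rw [norm_A hrank, hz1, hz2] at hnm
    rw [show (-2 : K) = algebraMap ℚ K ((-2 : ℚ)) by norm_num] at hnm
    rw [norm_A hrank] at hnm
    have hZ : (p : ℤ) ^ 2 * z1 * z2 = 4 := by exact_mod_cast hnm
    have hp3 : 3 ≤ (p : ℤ) := by
      have h2 := hp.two_le
      have : p ≠ 2 := by
        intro h
        rw [h] at hpodd
        exact absurd hpodd (by decide)
      omega
    have h9 : (9 : ℤ) ≤ (p : ℤ) ^ 2 := by nlinarith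
    have hg : (9 : ℤ) ≤ (p : ℤ) ^ 2 * z1 * z2 := by
      calc (9 : ℤ) ≤ (p : ℤ) ^ 2 := h9
        _ ≤ (p : ℤ) ^ 2 * z1 := le_mul_of_one_le_right (by positivity) (by omega)
        _ ≤ (p : ℤ) ^ 2 * z1 * z2 := le_mul_of_one_le_right (by positivity) (by omega)
    omega

end Engine

section FLT3

variable {K : Type} [Field K] [NumberField K]

lemma endgame {d : ℤ} (hd : d < 0) {α : K} (hα : α ^ 2 = (d : K))
    (hrank : Module.finrank ℚ K = 2) (σ : 𝓞 K)
    (hσK : algebraMap (𝓞 K) K σ ≠ 0) (q : ℚ)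
    (hNm : Algebra.norm ℚ ((algebraMap (𝓞 K) K σ) ^ 3 + 1) = 3 * q ^ 2)
    (hTr : Algebra.trace ℚ K ((algebraMap (𝓞 K) K σ) ^ 3 + 1) = 3 * q) :
    IsUnit σ := by
  obtain ⟨mz, hmz⟩ := norm_int hd hα hrank σ
  obtain ⟨j, hj⟩ := trace_int hd hα hrank (σ ^ 3 + 1)
  simp only [NumberField.RingOfIntegers.coe_eq_algebraMap] at hj hmz
  have hcoe : algebraMap (𝓞 K) K (σ ^ 3 + 1) = (algebraMap (𝓞 K) K σ) ^ 3 + 1 := by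
    rw [map_add, map_pow, map_one]
  rw [hcoe] at hj
  have hq3 : (j : ℚ) = 3 * q := by rw [← hj, hTr]
  have hnm3 : (mz : ℚ) ^ 3 = 3 * q ^ 2 - 3 * q + 1 := by
    have h2 := nm_shift hrank ((algebraMap (𝓞 K) K σ) ^ 3 + 1)
    rw [add_sub_cancel_right] at h2
    rw [map_pow, hmz, hNm, hTr] at h2
    rw [← h2]
  have hZ3 : 3 * mz ^ 3 = j ^ 2 - 3 * j + 3 := by
    have h : (3 : ℚ) * (mz : ℚ) ^ 3 = (j : ℚ) ^ 2 - 3 * (j : ℚ) + 3 := by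
      rw [hnm3, hq3]; ring
    exact_mod_cast h
  have hdvd : (3 : ℤ) ∣ j ^ 2 := ⟨mz ^ 3 + j - 1, by linarith⟩
  have hj3 : (3 : ℤ) ∣ j := (by norm_num : Prime (3 : ℤ)).dvd_of_dvd_pow hdvd
  obtain ⟨qz, hqz⟩ := hj3
  have hqq : q = (qz : ℚ) := by
    have h : (3 : ℚ) * q = 3 * (qz : ℚ) := by
      rw [← hq3, hqz]; push_cast; ring
    linarith
  have hmz1 : 1 ≤ mz := by
    have hpos := norm_pos hd hα hrank _ hσK
    rw [hmz] at hpos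
    exact_mod_cast hpos
  have hfin : mz ^ 3 = 3 * qz ^ 2 - 3 * qz + 1 := by
    have h : (mz : ℚ) ^ 3 = 3 * (qz : ℚ) ^ 2 - 3 * (qz : ℚ) + 1 := by
      rw [hnm3, hqq]
    exact_mod_cast h
  have hone := cube_int mz (-qz) hmz1 (by linear_combination hfin)
  apply unit_norm1 hd hα hrank σ
  rw [NumberField.RingOfIntegers.coe_eq_algebraMap, hmz, hone]
  norm_num

lemma conj_zero : conj (0 : K) = 0 := by unfold conj; simp

lemma fltEngine {d : ℤ} (hd : d < 0) {α : K} (hα : α ^ 2 = (d : K))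
    (hrank : Module.finrank ℚ K = 2) (τ : 𝓞 K)
    (htr : Algebra.trace ℚ K (algebraMap (𝓞 K) K τ) = 1)
    (ω σ : 𝓞 K)
    (hω : (algebraMap (𝓞 K) K ω) ^ 2 + algebraMap (𝓞 K) K ω + 1 = 0)
    (hcase : τ = ω * σ ^ 3 ∨ τ = ω ^ 2 * σ ^ 3) : IsUnit τ := by
  have hτne : τ ≠ 0 := by
    intro h
    rw [h, map_zero, map_zero] at htr
    exact one_ne_zero htr.symm
  have hσne : σ ≠ 0 := by
    rcases hcase with h | h <;>
      · intro h0
        apply hτne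
        rw [h, h0]
        ring
  have hσK : algebraMap (𝓞 K) K σ ≠ 0 :=
    (map_ne_zero_iff _ NumberField.RingOfIntegers.coe_injective).mpr hσne
  set W : K := algebraMap (𝓞 K) K ω with hW
  set Sσ : K := (algebraMap (𝓞 K) K σ) ^ 3 with hSσdef
  have hWK3 : W ^ 3 = 1 := by linear_combination (W - 1) * hω
  -- conj W = W^2
  have hconjW : conj W = W ^ 2 := by
    have h1 : (conj W) ^ 2 + conj W + 1 = 0 := by
      have e1 : conj (W ^ 2 + W + 1) = conj 0 := by rw [hω]
      rw [conj_zero, conj_add, conj_add, conj_one hrank, conj_powK hd hα hrank] at e1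
      exact e1
    have h2 : (conj W - W) * (conj W - W ^ 2) = 0 := by
      linear_combination h1 + (W - 1 - conj W) * hω
    rcases mul_eq_zero.mp h2 with h | h
    · exfalso
      have hWW : conj W = W := sub_eq_zero.mp h
      have h3 : algebraMap ℚ K (Algebra.trace ℚ K W) = W + W := by
        rw [← sum_conj W, hWW]
      set w : ℚ := Algebra.trace ℚ K W / 2 with hw
      have hWrat : W = algebraMap ℚ K w := by
        have h2K : algebraMap ℚ K (2 : ℚ) = (2 : K) := by norm_num
        have e2 : algebraMap ℚ K w * 2 = W * 2 := by
          rw [← h2K, ← map_mul, hw, div_mul_cancel₀ _ (two_ne_zero), h3, h2K]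
          ring
        exact (mul_right_cancel₀ two_ne_zero e2).symm
      have h4 : (w ^ 2 + w + 1 : ℚ) = 0 := by
        apply (algebraMap ℚ K).injective
        rw [map_add, map_add, map_pow, map_one, map_zero, ← hWrat]
        exact hω
      nlinarith [sq_nonneg (2 * w + 1)]
    · exact sub_eq_zero.mp h
  -- beta
  have hβ2 : (2 * W + 1) ^ 2 = -3 := by linear_combination 4 * hω
  have c2 : conj (2 : K) = 2 := by
    rw [show (2 : K) = algebraMap ℚ K 2 by norm_num, conj_A hrank]
  have hβconj : conj (2 * W + 1) = -(2 * W + 1) := by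
    have e : conj (2 * W + 1) = 2 * conj W + 1 := by
      rw [conj_add, conj_one hrank, conj_mulK hd hα hrank, c2]
    rw [e, hconjW]
    linear_combination 2 * hω
  have hβne : (2 * W + 1) ≠ 0 := by
    intro h
    rw [h] at hβ2
    norm_num at hβ2
  have hconjτ : conj (algebraMap (𝓞 K) K τ) = 1 - algebraMap (𝓞 K) K τ := by
    unfold conj
    rw [htr, map_one]
  have hωunit : IsUnit ω := by
    refine IsUnit.of_mul_eq_one (a := ω) (-(1 + ω)) ?_
    apply NumberField.RingOfIntegers.eq_iff.mp
    simp only [NumberField.RingOfIntegers.coe_eq_algebraMap, map_mul, map_neg, map_add, map_one]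
    linear_combination -hω
  rcases hcase with hcaseA | hcaseB
  · -- case A : τ = ω σ³
    have hτK : algebraMap (𝓞 K) K τ = W * Sσ := by
      rw [hcaseA, map_mul, map_pow, hSσdef, hW]
    have hE : W * Sσ + W ^ 2 * conj Sσ = 1 := by
      have h1 : conj (W * Sσ) = W ^ 2 * conj Sσ := by
        rw [conj_mulK hd hα hrank, hconjW]
      have h2 : W * Sσ + conj (W * Sσ) = 1 := by
        rw [← hτK, hconjτ]
        ring
      rw [h1] at h2
      exact h2
    set Y : K := W * (Sσ + 1) with hY
    have hanti : conj Y = -Y := by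
      have e : conj Y = W ^ 2 * (conj Sσ + 1) := by
        rw [hY, conj_mulK hd hα hrank, hconjW, conj_add, conj_one hrank]
      have h1 : Y + conj Y = 0 := by
        rw [e, hY]
        linear_combination hE + hω
      linear_combination h1
    obtain ⟨cY, hcY⟩ := anti1 hd hα hrank Y hanti
    obtain ⟨cβ, hcβ⟩ := anti1 hd hα hrank (2 * W + 1) hβconj
    have hcβne : cβ ≠ 0 := by
      intro h
      apply hβne
      rw [hcβ, h]
      simp
    set q : ℚ := cY / cβ with hq
    have hYq : Y = algebraMap ℚ K q * (2 * W + 1) := by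
      rw [hcβ, hcY, ← mul_assoc, ← map_mul, hq, div_mul_cancel₀ _ hcβne]
    have hXY : Sσ + 1 = W ^ 2 * Y := by
      rw [hY]
      linear_combination (-(Sσ + 1)) * hWK3
    have hNmW : Algebra.norm ℚ W = 1 := by
      apply (algebraMap ℚ K).injective
      rw [← nm_eq hrank, hconjW, map_one]
      linear_combination hWK3
    have hNmβ : Algebra.norm ℚ (2 * W + 1) = 3 := by
      apply (algebraMap ℚ K).injective
      rw [← nm_eq hrank, hβconj, show algebraMap ℚ K (3:ℚ) = 3 by norm_num]
      linear_combination -hβ2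
    have hNmX : Algebra.norm ℚ (Sσ + 1) = 3 * q ^ 2 := by
      rw [hXY, map_mul, map_pow, hNmW, hYq, map_mul, hNmβ, norm_A hrank]
      ring
    have hTrX : Algebra.trace ℚ K (Sσ + 1) = 3 * q := by
      apply (algebraMap ℚ K).injective
      have e0 := sum_conj (Sσ + 1)
      have e1 : conj (Sσ + 1) = (conj W) ^ 2 * conj Y := by
        rw [hXY, conj_mulK hd hα hrank, conj_powK hd hα hrank]
      rw [e1, hconjW, hanti] at e0
      rw [← e0, hXY, hYq]
      rw [show algebraMap ℚ K (3 * q) = 3 * algebraMap ℚ K q by rw [map_mul, map_ofNat]]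
      linear_combination (algebraMap ℚ K q) * (-2 * W ^ 2 - W + 2) * hWK3
        - (algebraMap ℚ K q) * hω
    have hσunit : IsUnit σ := endgame hd hα hrank σ hσK q hNmX hTrX
    rw [hcaseA]
    exact hωunit.mul (hσunit.pow 3)
  · -- case B : τ = ω² σ³
    have hτK : algebraMap (𝓞 K) K τ = W ^ 2 * Sσ := by
      rw [hcaseB, map_mul, map_pow, map_pow, hSσdef, hW]
    have hE : W ^ 2 * Sσ + W * conj Sσ = 1 := by
      have h1 : conj (W ^ 2 * Sσ) = W * conj Sσ := by
        rw [conj_mulK hd hα hrank, conj_powK hd hα hrank, hconjW]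
        linear_combination (conj Sσ * W) * hWK3
      have h2 : W ^ 2 * Sσ + conj (W ^ 2 * Sσ) = 1 := by
        rw [← hτK, hconjτ]
        ring
      rw [h1] at h2
      exact h2
    set Y : K := W ^ 2 * (Sσ + 1) with hY
    have hanti : conj Y = -Y := by
      have e : conj Y = (conj W) ^ 2 * (conj Sσ + 1) := by
        rw [hY, conj_mulK hd hα hrank, conj_powK hd hα hrank, conj_add, conj_one hrank]
      have h1 : Y + conj Y = 0 := by
        rw [e, hconjW, hY]
        linear_combination hE + hω + W * (conj Sσ + 1) * hWK3
      linear_combination h1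
    obtain ⟨cY, hcY⟩ := anti1 hd hα hrank Y hanti
    obtain ⟨cβ, hcβ⟩ := anti1 hd hα hrank (2 * W + 1) hβconj
    have hcβne : cβ ≠ 0 := by
      intro h
      apply hβne
      rw [hcβ, h]
      simp
    set q : ℚ := cY / cβ with hq
    have hYq : Y = algebraMap ℚ K q * (2 * W + 1) := by
      rw [hcβ, hcY, ← mul_assoc, ← map_mul, hq, div_mul_cancel₀ _ hcβne]
    have hXY : Sσ + 1 = W * Y := by
      rw [hY]
      linear_combination (-(Sσ + 1)) * hWK3
    have hNmW : Algebra.norm ℚ W = 1 := by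
      apply (algebraMap ℚ K).injective
      rw [← nm_eq hrank, hconjW, map_one]
      linear_combination hWK3
    have hNmβ : Algebra.norm ℚ (2 * W + 1) = 3 := by
      apply (algebraMap ℚ K).injective
      rw [← nm_eq hrank, hβconj, show algebraMap ℚ K (3:ℚ) = 3 by norm_num]
      linear_combination -hβ2
    have hNmX : Algebra.norm ℚ (Sσ + 1) = 3 * (-q) ^ 2 := by
      rw [hXY, map_mul, hNmW, hYq, map_mul, hNmβ, norm_A hrank]
      ring
    have hTrX : Algebra.trace ℚ K (Sσ + 1) = 3 * (-q) := by
      apply (algebraMap ℚ K).injective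
      have e0 := sum_conj (Sσ + 1)
      have e1 : conj (Sσ + 1) = conj W * conj Y := by
        rw [hXY, conj_mulK hd hα hrank]
      rw [e1, hconjW, hanti] at e0
      rw [← e0, hXY, hYq]
      rw [show algebraMap ℚ K (3 * (-q)) = -3 * algebraMap ℚ K q by
        rw [show (3 * (-q) : ℚ) = -3 * q by ring, map_mul]
        norm_num]
      linear_combination (algebraMap ℚ K q) * hω - 2 * (algebraMap ℚ K q) * hWK3
    have hσunit : IsUnit σ := endgame hd hα hrank σ hσK (-q) hNmX hTrX
    rw [hcaseB]
    exact (hωunit.pow 2).mul (hσunit.pow 3)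

end FLT3

theorem stmt_1 (d : ℤ) (hd : d < 0) (hsq : Squarefree d)
    (K : Type) [Field K] [NumberField K] (α : K) (hα : α ^ 2 = (d : K))
    (hrank : Module.finrank ℚ K = 2)
    (τ : NumberField.RingOfIntegers K)
    (htr : Algebra.trace ℚ K (τ : K) = 1)
    (p : ℕ) (hp : p.Prime) (hpodd : Odd p)
    (ρ : NumberField.RingOfIntegers K) (hassoc : Associated (ρ ^ p) τ) :
    IsUnit τ := by
  obtain ⟨u, hu⟩ := hassoc
  -- basic facts about the unit u
  have hUne : algebraMap (𝓞 K) K ((u : 𝓞 K)) ≠ 0 := by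
    rw [map_ne_zero_iff _ NumberField.RingOfIntegers.coe_injective]
    exact u.ne_zero
  obtain ⟨zU, hzU⟩ := norm_int hd hα hrank (u : 𝓞 K)
  obtain ⟨zV, hzV⟩ := norm_int hd hα hrank ((u⁻¹ : (𝓞 K)ˣ) : 𝓞 K)
  simp only [NumberField.RingOfIntegers.coe_eq_algebraMap] at hzU hzV
  have hN1 : Algebra.norm ℚ (algebraMap (𝓞 K) K ((u : 𝓞 K))) = 1 := by
    have hUV : (algebraMap (𝓞 K) K ((u : 𝓞 K)))
        * (algebraMap (𝓞 K) K (((u⁻¹ : (𝓞 K)ˣ) : 𝓞 K))) = 1 := by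
      rw [← map_mul]
      rw [show ((u : 𝓞 K)) * (((u⁻¹ : (𝓞 K)ˣ) : 𝓞 K)) = 1 from u.mul_inv]
      exact map_one _
    have h := congrArg (Algebra.norm ℚ) hUV
    rw [map_mul, map_one, hzU, hzV] at h
    have hZ : zU * zV = 1 := by exact_mod_cast h
    have hpos : 0 < zU := by
      have := norm_pos hd hα hrank _ hUne
      rw [hzU] at this
      exact_mod_cast this
    have : zU = 1 := by
      rcases Int.mul_eq_one_iff_eq_one_or_neg_one.mp hZ with ⟨h1, _⟩ | ⟨h1, _⟩ <;> omega
    rw [hzU, this]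
    norm_num
  obtain ⟨T, hT⟩ := trace_int hd hα hrank (u : 𝓞 K)
  simp only [NumberField.RingOfIntegers.coe_eq_algebraMap] at hT
  have hUq : (algebraMap (𝓞 K) K ((u : 𝓞 K))) ^ 2
      - algebraMap ℚ K ((T : ℚ)) * (algebraMap (𝓞 K) K ((u : 𝓞 K)))
      + 1 = 0 := by
    have h := key1 hrank (algebraMap (𝓞 K) K ((u : 𝓞 K)))
    rw [hT, hN1, map_one] at h
    exact h
  -- helper to construct a p-th root of τ
  have habs : ∀ n k : ℕ, ((u : 𝓞 K)) ^ n = 1 → p * p = 1 + n * k →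
      ∃ π : 𝓞 K, π ^ p = τ := by
    intro n k hord hnk
    refine ⟨(u : 𝓞 K) ^ p * ρ, ?_⟩
    rw [mul_pow, ← pow_mul, hnk, pow_add, pow_mul, hord, one_pow, mul_one, pow_one]
    rw [← hu]
    ring
  obtain ⟨m, hm⟩ := hpodd
  have hmain : (∃ π : 𝓞 K, π ^ p = τ) →  IsUnit τ := by
    rintro ⟨π, hπ⟩
    exact mainEngine hd hα hrank hp ⟨m, hm⟩ τ htr π hπ
  -- case analysis on the unit
  have hy2 : (2 * (algebraMap (𝓞 K) K ((u : 𝓞 K))) - algebraMap ℚ K ((T : ℚ))) ^ 2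
      = algebraMap ℚ K ((T : ℚ) ^ 2 - 4) := by
    rw [map_sub, map_pow, map_ofNat]
    linear_combination 4 * hUq
  rcases sqrat hd hα hrank _ _ hy2 with ⟨w, hw, hsw⟩ | hTlt
  · -- u is rational, hence u² = 1
    apply hmain
    have hrat : algebraMap (𝓞 K) K ((u : 𝓞 K)) = algebraMap ℚ K ((w + T) / 2) := by
      have h2K : algebraMap ℚ K (2 : ℚ) = (2 : K) := by norm_num
      have e2 : algebraMap ℚ K ((w + T) / 2) * 2 = (algebraMap (𝓞 K) K ((u : 𝓞 K))) * 2 := by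
        rw [← h2K, ← map_mul, div_mul_cancel₀ _ (two_ne_zero), map_add, h2K]
        linear_combination -hw
      exact (mul_right_cancel₀ two_ne_zero e2).symm
    have hord : ((u : 𝓞 K)) ^ 2 = 1 := by
      apply NumberField.RingOfIntegers.eq_iff.mp
      simp only [NumberField.RingOfIntegers.coe_eq_algebraMap, map_pow, map_one]
      have hval : ((w + T) / 2 : ℚ) ^ 2 = 1 := by
        have := hN1
        rw [hrat, norm_A hrank] at this
        exact this
      rw [hrat, ← map_pow, hval, map_one]
    exact habs 2 (2 * m * m + 2 * m) hord (by rw [hm]; ring)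
  · -- |T| ≤ 1
    have hT4 : T = 0 ∨ T = 1 ∨ T = -1 := by
      have h1 : (T : ℚ) ^ 2 < 4 := by linarith
      have hZ : T ^ 2 < 4 := by exact_mod_cast h1
      have h2 : T ≤ 1 := by nlinarith
      have h3 : -1 ≤ T := by nlinarith
      omega
    rcases hT4 with hT0 | hT1 | hTm1
    · -- T = 0 : u⁴ = 1
      apply hmain
      have hU1 : (algebraMap (𝓞 K) K ((u : 𝓞 K))) ^ 2 = -1 := by
        rw [hT0] at hUq
        push_cast at hUq
        linear_combination hUq
      have hord : ((u : 𝓞 K)) ^ 4 = 1 := by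
        apply NumberField.RingOfIntegers.eq_iff.mp
        simp only [NumberField.RingOfIntegers.coe_eq_algebraMap, map_pow, map_one]
        rw [show (4 : ℕ) = 2 * 2 from rfl, pow_mul, hU1]
        norm_num
      exact habs 4 (m * m + m) hord (by rw [hm]; ring)
    · -- T = 1 : u³ = -1
      have hU3 : (algebraMap (𝓞 K) K ((u : 𝓞 K))) ^ 3 = -1 := by
        rw [hT1] at hUq
        push_cast at hUq
        linear_combination ((algebraMap (𝓞 K) K ((u : 𝓞 K))) + 1) * hUq
      by_cases hp3 : p = 3
      · -- the FLT3 case with ω = u², σ = -ρ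
        subst hp3
        have hu3O : ((u : 𝓞 K)) ^ 3 = -1 := by
          apply NumberField.RingOfIntegers.eq_iff.mp
          simp only [NumberField.RingOfIntegers.coe_eq_algebraMap, map_pow, map_neg, map_one]
          exact hU3
        refine fltEngine hd hα hrank τ htr ((u : 𝓞 K) ^ 2) (-ρ) ?_ (Or.inr ?_)
        · simp only [map_pow]
          rw [hT1] at hUq
          push_cast at hUq
          linear_combination ((algebraMap (𝓞 K) K ((u : 𝓞 K))) ^ 2
            + (algebraMap (𝓞 K) K ((u : 𝓞 K))) + 1) * hUq
        · linear_combination -hu + ((u : 𝓞 K) * ρ ^ 3) * hu3O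
      · -- u⁶ = 1 and gcd(p,6)=1
        apply hmain
        have hord : ((u : 𝓞 K)) ^ 6 = 1 := by
          apply NumberField.RingOfIntegers.eq_iff.mp
          simp only [NumberField.RingOfIntegers.coe_eq_algebraMap, map_pow, map_one]
          rw [show (6 : ℕ) = 3 * 2 from rfl, pow_mul, hU3]
          norm_num
        have hmod : ∃ k, p * p = 1 + 6 * k := by
          have h2 : p % 2 = 1 := Nat.odd_iff.mp ⟨m, hm⟩
          have h3 : ¬ (3 ∣ p) := by
            intro h
            exact hp3 ((Nat.prime_dvd_prime_iff_eq (by norm_num) hp).mp h).symm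
          have h3' : p % 3 ≠ 0 := fun h => h3 (Nat.dvd_of_mod_eq_zero h)
          have h6 : p % 6 = 1 ∨ p % 6 = 5 := by omega
          rcases h6 with h | h
          · obtain ⟨r, hr⟩ : ∃ r, p = 6 * r + 1 := ⟨p / 6, by omega⟩
            exact ⟨6 * r * r + 2 * r, by rw [hr]; ring⟩
          · obtain ⟨r, hr⟩ : ∃ r, p = 6 * r + 5 := ⟨p / 6, by omega⟩
            exact ⟨6 * r * r + 10 * r + 4, by rw [hr]; ring⟩
        obtain ⟨k, hk⟩ := hmod
        exact habs 6 k hord hk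
    · -- T = -1 : u³ = 1
      have hUq' : (algebraMap (𝓞 K) K ((u : 𝓞 K))) ^ 2
          + (algebraMap (𝓞 K) K ((u : 𝓞 K))) + 1 = 0 := by
        rw [hTm1] at hUq
        push_cast at hUq
        linear_combination hUq
      by_cases hp3 : p = 3
      · subst hp3
        refine fltEngine hd hα hrank τ htr ((u : 𝓞 K)) ρ hUq' (Or.inl ?_)
        linear_combination -hu
      · apply hmain
        have hU3 : (algebraMap (𝓞 K) K ((u : 𝓞 K))) ^ 3 = 1 := by
          linear_combination ((algebraMap (𝓞 K) K ((u : 𝓞 K))) - 1) * hUq'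
        have hord : ((u : 𝓞 K)) ^ 6 = 1 := by
          apply NumberField.RingOfIntegers.eq_iff.mp
          simp only [NumberField.RingOfIntegers.coe_eq_algebraMap, map_pow, map_one]
          rw [show (6 : ℕ) = 3 * 2 from rfl, pow_mul, hU3]
          norm_num
        have hmod : ∃ k, p * p = 1 + 6 * k := by
          have h2 : p % 2 = 1 := Nat.odd_iff.mp ⟨m, hm⟩
          have h3 : ¬ (3 ∣ p) := by
            intro h
            exact hp3 ((Nat.prime_dvd_prime_iff_eq (by norm_num) hp).mp h).symm
          have h3' : p % 3 ≠ 0 := fun h => h3 (Nat.dvd_of_mod_eq_zero h)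
          have h6 : p % 6 = 1 ∨ p % 6 = 5 := by omega
          rcases h6 with h | h
          · obtain ⟨r, hr⟩ : ∃ r, p = 6 * r + 1 := ⟨p / 6, by omega⟩
            exact ⟨6 * r * r + 2 * r, by rw [hr]; ring⟩
          · obtain ⟨r, hr⟩ : ∃ r, p = 6 * r + 5 := ⟨p / 6, by omega⟩
            exact ⟨6 * r * r + 10 * r + 4, by rw [hr]; ring⟩
        obtain ⟨k, hk⟩ := hmod
        exact habs 6 k hord hk
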